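/- arXiv:1906.10582 — 3 statements merged into one kernel-verified Lean document; each statement's English description precedes it below -/
import Mathlib

section
/- Let M > 0 and let f : ℝ^k → ℝ be a continuous function satisfying |f(x)| ≤ M(1 + |x|) for all x ∈ ℝ^k. If (x_n)_{n ∈ ℕ} is a sequence in ℝ^k converging to x ∈ ℝ^k, then f_n(x_n) → f(x) as n → ∞ (where f_n is defined for n ≥ M). -/
/-- The set of points of `ℝ^k` with rational coordinates. -/
def ratPts (k : ℕ) : Set (EuclideanSpace ℝ (Fin k)) :=
  {y | ∀ i, ∃ q : ℚ, y i = (q : ℝ)}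

/-- The inf-convolution `f_n(x) = inf_{y ∈ ℚ^k} (f(y) + n·|x − y|)`. -/
noncomputable def infConv {k : ℕ} (f : EuclideanSpace ℝ (Fin k) → ℝ) (n : ℝ)
    (x : EuclideanSpace ℝ (Fin k)) : ℝ :=
  sInf ((fun y => f y + n * ‖x - y‖) '' ratPts k)

lemma exists_ratPts_near {k : ℕ} (z : EuclideanSpace ℝ (Fin k)) {ε : ℝ} (hε : 0 < ε) :
    ∃ y ∈ ratPts k, ‖z - y‖ < ε := by
  set δ := ε / (Real.sqrt k + 1) with hδdef
  have hsk : (0:ℝ) ≤ Real.sqrt k := Real.sqrt_nonneg _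
  have hδ : 0 < δ := div_pos hε (by linarith)
  have h : ∀ i : Fin k, ∃ q : ℚ, |z i - (q:ℝ)| < δ := fun i => exists_rat_near (z i) hδ
  choose q hq using h
  set y : EuclideanSpace ℝ (Fin k) := WithLp.toLp 2 (fun i => (q i : ℝ)) with hy
  refine ⟨y, fun i => ⟨q i, rfl⟩, ?_⟩
  have hnorm : ‖z - y‖ ≤ Real.sqrt (k * δ^2) := by
    rw [EuclideanSpace.norm_eq]
    apply Real.sqrt_le_sqrt
    calc ∑ i, ‖(z - y) i‖^2
        ≤ ∑ _i : Fin k, δ^2 := by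
          apply Finset.sum_le_sum
          intro i _
          have : (z - y) i = z i - q i := rfl
          rw [this, Real.norm_eq_abs]
          have := (hq i).le
          nlinarith [abs_nonneg (z i - (q i:ℝ)), sq_abs (z i - (q i:ℝ))]
      _ = k * δ^2 := by simp [Finset.sum_const]
  have h2 : Real.sqrt (k * δ^2) = Real.sqrt k * δ := by
    rw [Real.sqrt_mul (Nat.cast_nonneg k), Real.sqrt_sq hδ.le]
  have h3 : Real.sqrt k * δ < ε := by
    have he : δ * (Real.sqrt k + 1) = ε := div_mul_cancel₀ _ (by linarith)
    nlinarith
  rw [h2] at hnorm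
  linarith

theorem statement_5 {k : ℕ} (M : ℝ) (hM : 0 < M)
    (f : EuclideanSpace ℝ (Fin k) → ℝ) (hf : Continuous f)
    (hgrow : ∀ x, |f x| ≤ M * (1 + ‖x‖))
    (x : ℕ → EuclideanSpace ℝ (Fin k)) (x₀ : EuclideanSpace ℝ (Fin k))
    (hx : Filter.Tendsto x Filter.atTop (nhds x₀)) :
    Filter.Tendsto (fun n : ℕ => infConv f (n : ℝ) (x n)) Filter.atTop (nhds (f x₀)) := by
  rw [Metric.tendsto_atTop]
  intro ε hε
  obtain ⟨δ, hδpos, hδ⟩ := Metric.continuous_iff.1 hf x₀ (ε/2) (by linarith)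
  obtain ⟨N₁, hN₁⟩ := Metric.tendsto_atTop.1 hx (δ/2) (by positivity)
  set C := M * (1 + ‖x₀‖) + |f x₀| + 1 with hCdef
  have hC : 0 < C := by positivity
  obtain ⟨N₂, hN₂⟩ := exists_nat_gt (2*M + 2*C/δ)
  refine ⟨max N₁ N₂, fun n hn => ?_⟩
  have hn1 : N₁ ≤ n := le_trans (le_max_left _ _) hn
  have hn2 : N₂ ≤ n := le_trans (le_max_right _ _) hn
  have hdx : dist (x n) x₀ < δ/2 := hN₁ n hn1
  have hnM : 2*M + 2*C/δ < (n:ℝ) := lt_of_lt_of_le hN₂ (Nat.cast_le.2 hn2)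
  have hn0 : (0:ℝ) ≤ (n:ℝ) := Nat.cast_nonneg n
  have hCδpos : 0 < 2*C/δ := by positivity
  have hCδ : (2*C/δ) * δ = 2*C := div_mul_cancel₀ _ hδpos.ne'
  -- lower bound
  have hlb : ∀ a ∈ (fun y => f y + (n:ℝ) * ‖x n - y‖) '' ratPts k, f x₀ - ε/2 ≤ a := by
    rintro a ⟨y, hy, rfl⟩
    by_cases hc : dist y x₀ < δ
    · have h1 : dist (f y) (f x₀) < ε/2 := hδ y hc
      rw [Real.dist_eq] at h1
      have h2 := (abs_lt.1 h1).1
      have hnn : 0 ≤ (n:ℝ) * ‖x n - y‖ := by positivity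
      simp only []
      linarith
    · push_neg at hc
      set d := ‖y - x₀‖ with hd
      have hdd : dist y x₀ = d := dist_eq_norm y x₀
      have hd1 : δ ≤ d := hdd ▸ hc
      have htri : d ≤ ‖x n - y‖ + dist (x n) x₀ := by
        have := norm_sub_le_norm_sub_add_norm_sub y (x n) x₀
        rw [dist_eq_norm]
        calc d ≤ ‖y - x n‖ + ‖x n - x₀‖ := this
          _ = ‖x n - y‖ + ‖x n - x₀‖ := by rw [norm_sub_rev]
      have h1 : d/2 ≤ ‖x n - y‖ := by linarith
      have h2 : -(M * (1 + ‖y‖)) ≤ f y := neg_le_of_abs_le (hgrow y)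
      have h3 : ‖y‖ ≤ ‖x₀‖ + d := by
        calc ‖y‖ = ‖y - x₀ + x₀‖ := by rw [sub_add_cancel]
          _ ≤ ‖y - x₀‖ + ‖x₀‖ := norm_add_le _ _
          _ = ‖x₀‖ + d := by rw [add_comm]
      have h4 : (n:ℝ) * (d/2) ≤ (n:ℝ) * ‖x n - y‖ :=
        mul_le_mul_of_nonneg_left h1 hn0
      have h5 : -(M * (1 + ‖x₀‖ + d)) ≤ f y := by nlinarith
      have hfx := le_abs_self (f x₀)
      simp only []
      nlinarith [mul_lt_mul_of_pos_right hnM hδpos,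
        mul_nonneg (by linarith : (0:ℝ) ≤ (n:ℝ) - 2*M) (by linarith : (0:ℝ) ≤ d - δ)]
  have hbdd : BddBelow ((fun y => f y + (n:ℝ) * ‖x n - y‖) '' ratPts k) :=
    ⟨f x₀ - ε/2, hlb⟩
  obtain ⟨y₀, hy₀, _⟩ := exists_ratPts_near (x n) one_pos
  have hne : ((fun y => f y + (n:ℝ) * ‖x n - y‖) '' ratPts k).Nonempty :=
    ⟨_, ⟨y₀, hy₀, rfl⟩⟩
  have hlow : f x₀ - ε/2 ≤ infConv f (n:ℝ) (x n) := le_csInf hne hlb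
  -- upper bound
  have hrpos : 0 < min (δ/2) (ε/(2*((n:ℝ)+1))) := by positivity
  obtain ⟨y, hy, hny⟩ := exists_ratPts_near (x n) hrpos
  have hup : infConv f (n:ℝ) (x n) ≤ f y + (n:ℝ) * ‖x n - y‖ :=
    csInf_le hbdd ⟨y, hy, rfl⟩
  have hyx₀ : dist y x₀ < δ := by
    have h1 : dist y (x n) < δ/2 := by
      rw [dist_eq_norm, norm_sub_rev]
      exact lt_of_lt_of_le hny (min_le_left _ _)
    calc dist y x₀ ≤ dist y (x n) + dist (x n) x₀ := dist_triangle _ _ _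
      _ < δ/2 + δ/2 := by linarith
      _ = δ := by ring
  have hfy : |f y - f x₀| < ε/2 := by
    have := hδ y hyx₀; rwa [Real.dist_eq] at this
  have hsmall : (n:ℝ) * ‖x n - y‖ < ε/2 := by
    have hB : ‖x n - y‖ < ε/(2*((n:ℝ)+1)) := lt_of_lt_of_le hny (min_le_right _ _)
    have ht : (0:ℝ) < ε/(2*((n:ℝ)+1)) := by positivity
    have hq : (ε/(2*((n:ℝ)+1))) * (2*((n:ℝ)+1)) = ε := div_mul_cancel₀ _ (by positivity)
    have h6 := mul_le_mul_of_nonneg_left hB.le hn0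
    nlinarith
  have hup2 : infConv f (n:ℝ) (x n) < f x₀ + ε := by
    have := (abs_lt.1 hfy).2
    linarith
  rw [Real.dist_eq, abs_lt]
  constructor <;> linarith
end

section
/- Let T > 0, β > 0, and let f : Δ → ℝ^k be a jointly measurable function on Δ = {(t, s) ∈ [0, T]² : t ≤ s} with ∫_0^T ∫_t^T e^{βs} |f(t, s)|² ds dt < ∞. Then ∫_0^T ∫_t^T β e^{βs} |∫_s^T f(t, u) du|² ds dt ≤ (4/β) ∫_0^T ∫_t^T e^{βs} |f(t, s)|² ds dt. -/
open MeasureTheory Real Set ENNReal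

lemma cs_sq {α : Type*} [MeasurableSpace α] {μ : Measure α} {f g : α → ℝ≥0∞}
    (hf : AEMeasurable f μ) (hg : AEMeasurable g μ) :
    (∫⁻ a, f a * g a ∂μ) ^ 2 ≤ (∫⁻ a, f a ^ 2 ∂μ) * (∫⁻ a, g a ^ 2 ∂μ) := by
  have hpq : Real.HolderConjugate 2 2 := by constructor <;> norm_num
  have h := ENNReal.lintegral_mul_le_Lp_mul_Lq μ hpq hf hg
  have h2 : (∫⁻ a, (f * g) a ∂μ) ^ 2 ≤
      ((∫⁻ a, f a ^ (2:ℝ) ∂μ) ^ (1/(2:ℝ)) * (∫⁻ a, g a ^ (2:ℝ) ∂μ) ^ (1/(2:ℝ))) ^ 2 :=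
    pow_le_pow_left₀ (zero_le ..) h 2
  have e1 : ∀ h : α → ℝ≥0∞, (∫⁻ a, h a ^ (2:ℝ) ∂μ) = ∫⁻ a, h a ^ 2 ∂μ := fun h =>
    lintegral_congr fun a => by rw [← ENNReal.rpow_natCast]; norm_num
  calc (∫⁻ a, f a * g a ∂μ) ^ 2 = (∫⁻ a, (f * g) a ∂μ) ^ 2 := rfl
    _ ≤ ((∫⁻ a, f a ^ (2:ℝ) ∂μ) ^ (1/(2:ℝ)) * (∫⁻ a, g a ^ (2:ℝ) ∂μ) ^ (1/(2:ℝ))) ^ 2 := h2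
    _ = (∫⁻ a, f a ^ 2 ∂μ) * (∫⁻ a, g a ^ 2 ∂μ) := by
        rw [mul_pow, ← ENNReal.rpow_natCast (_ ^ (1/(2:ℝ))) 2,
          ← ENNReal.rpow_natCast (_ ^ (1/(2:ℝ))) 2, ← ENNReal.rpow_mul, ← ENNReal.rpow_mul,
          e1, e1]
        norm_num

lemma exp_int_le {β s T : ℝ} (hβ : 0 < β) (h : s ≤ T) :
    ∫ u in Icc s T, Real.exp (-(β*u)/2) ≤ 2/β * Real.exp (-(β*s)/2) := by
  have hd : ∀ x : ℝ, HasDerivAt (fun y : ℝ => -(2/β) * Real.exp (-(β*y)/2))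
      (Real.exp (-(β*x)/2)) x := by
    intro x
    have h1 : HasDerivAt (fun y : ℝ => -(β*y)/2) (-β/2) x := by
      simpa using (((hasDerivAt_id x).const_mul β).neg.div_const 2)
    have := (h1.exp).const_mul (-(2/β))
    refine this.congr_deriv ?_
    have hq : (2/β)*(β/2) = 1 := by rw [div_mul_div_comm, mul_comm 2 β, div_self (by positivity)]
    linear_combination Real.exp (-(β*x)/2) * hq
  have heq : ∫ u in Icc s T, Real.exp (-(β*u)/2)
      = -(2/β) * Real.exp (-(β*T)/2) - (-(2/β) * Real.exp (-(β*s)/2)) := by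
    rw [MeasureTheory.integral_Icc_eq_integral_Ioc, ← intervalIntegral.integral_of_le h]
    exact intervalIntegral.integral_eq_sub_of_hasDerivAt (fun x _ => hd x)
      ((Real.continuous_exp.comp (by continuity)).intervalIntegrable s T)
  rw [heq]
  have := Real.exp_pos (-(β*T)/2)
  have h2 : 0 < 2/β := by positivity
  nlinarith
lemma exp_int2_le {β t u : ℝ} (hβ : 0 < β) (h : t ≤ u) :
    ∫ s in Icc t u, 2 * Real.exp (β*s/2) ≤ 4/β * Real.exp (β*u/2) := by
  have hd : ∀ x : ℝ, HasDerivAt (fun y : ℝ => 4/β * Real.exp (β*y/2))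
      (2 * Real.exp (β*x/2)) x := by
    intro x
    have h1 : HasDerivAt (fun y : ℝ => β*y/2) (β/2) x := by
      simpa using (((hasDerivAt_id x).const_mul β).div_const 2)
    have := (h1.exp).const_mul (4/β)
    refine this.congr_deriv ?_
    have hq : (2/β)*(β/2) = 1 := by rw [div_mul_div_comm, mul_comm 2 β, div_self (by positivity)]
    linear_combination 2 * Real.exp (β*x/2) * hq
  have heq : ∫ s in Icc t u, 2 * Real.exp (β*s/2)
      = 4/β * Real.exp (β*u/2) - 4/β * Real.exp (β*t/2) := by
    rw [MeasureTheory.integral_Icc_eq_integral_Ioc, ← intervalIntegral.integral_of_le h]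
    exact intervalIntegral.integral_eq_sub_of_hasDerivAt (fun x _ => hd x)
      ((continuous_const.mul (Real.continuous_exp.comp (by continuity))).intervalIntegrable t u)
  rw [heq]
  have := Real.exp_pos (β*t/2)
  have h2 : 0 < 4/β := by positivity
  nlinarith

lemma lint_ofReal_cont {a b : ℝ} {g : ℝ → ℝ} (hg : Continuous g) (hg0 : ∀ x, 0 ≤ g x) :
    ∫⁻ u in Icc a b, ENNReal.ofReal (g u) = ENNReal.ofReal (∫ u in Icc a b, g u) := by
  rw [← ofReal_integral_eq_lintegral_ofReal hg.integrableOn_Icc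
    (Filter.Eventually.of_forall hg0)]

theorem statement_9 {k : ℕ} (T β : ℝ) (hT : 0 < T) (hβ : 0 < β)
    (f : ℝ → ℝ → EuclideanSpace ℝ (Fin k))
    (hmeas : Measurable fun p : ℝ × ℝ => f p.1 p.2)
    (hfin : (∫⁻ t in Set.Icc 0 T, ∫⁻ s in Set.Icc t T,
        ENNReal.ofReal (Real.exp (β * s) * ‖f t s‖ ^ 2)) < ⊤) :
    (∫⁻ t in Set.Icc 0 T, ∫⁻ s in Set.Icc t T,
        ENNReal.ofReal (β * Real.exp (β * s) * ‖∫ u in Set.Icc s T, f t u‖ ^ 2))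
      ≤ ENNReal.ofReal (4 / β) *
        ∫⁻ t in Set.Icc 0 T, ∫⁻ s in Set.Icc t T,
          ENNReal.ofReal (Real.exp (β * s) * ‖f t s‖ ^ 2) := by
  clear hfin hT
  have hlin : ∀ a b : ℝ, Continuous fun u : ℝ => a * u / b :=
    fun a b => (continuous_const.mul continuous_id).div_const b
  have hlinn : ∀ a b : ℝ, Continuous fun u : ℝ => -(a * u) / b :=
    fun a b => ((continuous_const.mul continuous_id).neg).div_const b
  have hb0 : (β:ℝ) ≠ 0 := hβ.ne'
  have hmt : ∀ t, Measurable fun u => f t u := fun t =>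
    hmeas.comp (measurable_const.prodMk measurable_id)
  set h : ℝ → ℝ → ℝ≥0∞ := fun t u => ENNReal.ofReal (Real.exp (β*u/2) * ‖f t u‖^2) with hh
  have hhm : ∀ t, Measurable (h t) := fun t =>
    ENNReal.measurable_ofReal.comp
      (((Real.continuous_exp.comp (hlin β 2)).measurable).mul
        (((hmt t).norm).pow_const 2))
  set c : ℝ → ℝ≥0∞ := fun s => ENNReal.ofReal (2 * Real.exp (β*s/2)) with hc
  have hcm : Measurable c :=
    ENNReal.measurable_ofReal.comp
      (continuous_const.mul (Real.continuous_exp.comp (hlin β 2))).measurable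
  -- pointwise bound
  have key1 : ∀ t s : ℝ, ENNReal.ofReal (β * Real.exp (β * s) * ‖∫ u in Icc s T, f t u‖ ^ 2)
      ≤ c s * ∫⁻ u in Icc s T, h t u := by
    intro t s
    by_cases hsT : s ≤ T
    swap
    · rw [Set.Icc_eq_empty hsT]
      simp
    -- step 1: norm of integral ≤ lintegral of norm
    have step1 : ENNReal.ofReal ‖∫ u in Icc s T, f t u‖
        ≤ ∫⁻ u in Icc s T, ENNReal.ofReal ‖f t u‖ := by
      rw [ofReal_norm_eq_enorm]
      simp_rw [ofReal_norm_eq_enorm]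
      exact enorm_integral_le_lintegral_enorm _
    -- factorization
    have fact : ∀ u : ℝ, ENNReal.ofReal ‖f t u‖ =
        ENNReal.ofReal (Real.exp (-(β*u)/4)) * ENNReal.ofReal (Real.exp (β*u/4) * ‖f t u‖) := by
      intro u
      rw [← ENNReal.ofReal_mul (Real.exp_nonneg _), ← mul_assoc, ← Real.exp_add]
      have : -(β*u)/4 + β*u/4 = 0 := by ring
      rw [this, Real.exp_zero, one_mul]
    have hcs := cs_sq (μ := volume.restrict (Icc s T))
      (f := fun u => ENNReal.ofReal (Real.exp (-(β*u)/4)))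
      (g := fun u => ENNReal.ofReal (Real.exp (β*u/4) * ‖f t u‖))
      (ENNReal.measurable_ofReal.comp
        (Real.continuous_exp.comp (hlinn β 4)).measurable).aemeasurable
      (ENNReal.measurable_ofReal.comp
        ((Real.continuous_exp.comp (hlin β 4)).measurable.mul
          ((hmt t).norm))).aemeasurable
    -- identify the squares
    have eA : (∫⁻ u in Icc s T, ENNReal.ofReal (Real.exp (-(β*u)/4)) ^ 2)
        = ∫⁻ u in Icc s T, ENNReal.ofReal (Real.exp (-(β*u)/2)) := by
      apply lintegral_congr; intro u
      rw [← ENNReal.ofReal_pow (Real.exp_nonneg _), sq, ← Real.exp_add]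
      congr 1; ring
    have eB : (∫⁻ u in Icc s T, ENNReal.ofReal (Real.exp (β*u/4) * ‖f t u‖) ^ 2)
        = ∫⁻ u in Icc s T, h t u := by
      apply lintegral_congr; intro u
      rw [← ENNReal.ofReal_pow (by positivity), mul_pow, sq (Real.exp _), ← Real.exp_add]
      congr 2; ring
    rw [eA, eB] at hcs
    -- bound the first factor
    have hA : (∫⁻ u in Icc s T, ENNReal.ofReal (Real.exp (-(β*u)/2)))
        ≤ ENNReal.ofReal (2/β * Real.exp (-(β*s)/2)) := by
      rw [lint_ofReal_cont (g := fun u => Real.exp (-(β*u)/2)) (Real.continuous_exp.comp (hlinn β 2))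
        (fun x => (Real.exp_nonneg _))]
      exact ENNReal.ofReal_le_ofReal (exp_int_le hβ hsT)
    calc ENNReal.ofReal (β * Real.exp (β * s) * ‖∫ u in Icc s T, f t u‖ ^ 2)
        = ENNReal.ofReal (β * Real.exp (β * s)) *
            ENNReal.ofReal ‖∫ u in Icc s T, f t u‖ ^ 2 := by
          rw [← ENNReal.ofReal_pow (norm_nonneg _), ← ENNReal.ofReal_mul (by positivity)]
      _ ≤ ENNReal.ofReal (β * Real.exp (β * s)) *
            (∫⁻ u in Icc s T, ENNReal.ofReal ‖f t u‖) ^ 2 :=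
          mul_le_mul_right (pow_le_pow_left₀ (zero_le ..) step1 2) _
      _ = ENNReal.ofReal (β * Real.exp (β * s)) *
            (∫⁻ u in Icc s T, ENNReal.ofReal (Real.exp (-(β*u)/4)) *
              ENNReal.ofReal (Real.exp (β*u/4) * ‖f t u‖)) ^ 2 := by
          congr 2; exact lintegral_congr fun u => fact u
      _ ≤ ENNReal.ofReal (β * Real.exp (β * s)) *
            ((∫⁻ u in Icc s T, ENNReal.ofReal (Real.exp (-(β*u)/2))) *
              ∫⁻ u in Icc s T, h t u) := mul_le_mul_right hcs _
      _ ≤ ENNReal.ofReal (β * Real.exp (β * s)) *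
            (ENNReal.ofReal (2/β * Real.exp (-(β*s)/2)) * ∫⁻ u in Icc s T, h t u) :=
          mul_le_mul_right (mul_le_mul_left hA _) _
      _ = c s * ∫⁻ u in Icc s T, h t u := by
          rw [← mul_assoc, ← ENNReal.ofReal_mul (by positivity)]
          congr 2
          have h2 : Real.exp (β*s) * Real.exp (-(β*s)/2) = Real.exp (β*s/2) := by
            rw [← Real.exp_add]; congr 1; ring
          calc β * Real.exp (β*s) * (2/β * Real.exp (-(β*s)/2))
              = (β * (2/β)) * (Real.exp (β*s) * Real.exp (-(β*s)/2)) := by ring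
            _ = 2 * Real.exp (β*s/2) := by rw [h2]; congr 1; field_simp
  have key2 : ∀ t : ℝ, t ≤ T →
      (∫⁻ s in Icc t T, c s * ∫⁻ u in Icc s T, h t u)
      ≤ ENNReal.ofReal (4/β) *
          ∫⁻ s in Icc t T, ENNReal.ofReal (Real.exp (β * s) * ‖f t s‖ ^ 2) := by
    intro t htT
    set G : ℝ → ℝ → ℝ≥0∞ := fun s u => Set.indicator {q : ℝ × ℝ | q.1 ≤ q.2}
        (fun q => c q.1 * h t q.2) (s, u) with hG
    have hGmeas : Measurable fun q : ℝ × ℝ => G q.1 q.2 := by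
      have : (fun q : ℝ × ℝ => G q.1 q.2)
          = Set.indicator {q : ℝ × ℝ | q.1 ≤ q.2} (fun q => c q.1 * h t q.2) := by
        funext q; rw [hG]
      rw [this]
      exact ((hcm.comp measurable_fst).mul ((hhm t).comp measurable_snd)).indicator
        (measurableSet_le measurable_fst measurable_snd)
    have e1 : (∫⁻ s in Icc t T, c s * ∫⁻ u in Icc s T, h t u)
        = ∫⁻ s in Icc t T, ∫⁻ u in Icc t T, G s u := by
      apply setLIntegral_congr_fun measurableSet_Icc
      intro s hs
      have hptw : ∀ u : ℝ, G s u = (Ici s).indicator (fun u => c s * h t u) u := fun u => by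
        by_cases hsu : s ≤ u <;> simp [hG, Set.indicator, Set.mem_Ici, hsu]
      have hset2 : Ici s ∩ Icc t T = Icc s T := by
        ext u; simp only [mem_inter_iff, mem_Ici, mem_Icc]
        exact ⟨fun x => ⟨x.1, x.2.2⟩, fun x => ⟨x.1, hs.1.trans x.1, x.2⟩⟩
      calc c s * ∫⁻ u in Icc s T, h t u
          = ∫⁻ u in Icc s T, c s * h t u := (lintegral_const_mul' _ _ ENNReal.ofReal_ne_top).symm
        _ = ∫⁻ u in Icc t T, (Ici s).indicator (fun u => c s * h t u) u := by
            rw [lintegral_indicator measurableSet_Ici _,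
              Measure.restrict_restrict measurableSet_Ici, hset2]
        _ = ∫⁻ u in Icc t T, G s u := lintegral_congr fun u => (hptw u).symm
    have e2 : (∫⁻ s in Icc t T, ∫⁻ u in Icc t T, G s u)
        = ∫⁻ u in Icc t T, ∫⁻ s in Icc t T, G s u :=
      lintegral_lintegral_swap hGmeas.aemeasurable
    have e3 : (∫⁻ u in Icc t T, ∫⁻ s in Icc t T, G s u)
        ≤ ∫⁻ u in Icc t T, ENNReal.ofReal (4/β) *
            ENNReal.ofReal (Real.exp (β * u) * ‖f t u‖ ^ 2) := by
      apply lintegral_mono_ae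
      rw [ae_restrict_iff' measurableSet_Icc]
      apply Filter.Eventually.of_forall
      intro u hu
      have hptw : ∀ s : ℝ, G s u = (Iic u).indicator (fun s => c s * h t u) s := fun s => by
        by_cases hsu : s ≤ u <;> simp [hG, Set.indicator, Set.mem_Iic, hsu]
      have hset2 : Iic u ∩ Icc t T = Icc t u := by
        ext s; simp only [mem_inter_iff, mem_Iic, mem_Icc]
        exact ⟨fun x => ⟨x.2.1, x.1⟩, fun x => ⟨x.2, x.1, x.2.trans hu.2⟩⟩
      calc (∫⁻ s in Icc t T, G s u)
          = ∫⁻ s in Icc t T, (Iic u).indicator (fun s => c s * h t u) s :=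
            lintegral_congr fun s => hptw s
        _ = ∫⁻ s in Icc t u, c s * h t u := by
            rw [lintegral_indicator measurableSet_Iic _,
              Measure.restrict_restrict measurableSet_Iic, hset2]
        _ = (∫⁻ s in Icc t u, c s) * h t u := lintegral_mul_const' _ _ ENNReal.ofReal_ne_top
        _ ≤ ENNReal.ofReal (4/β * Real.exp (β*u/2)) * h t u := by
            apply mul_le_mul_left
            rw [hc]
            rw [lint_ofReal_cont (g := fun s => 2 * Real.exp (β*s/2)) (continuous_const.mul (Real.continuous_exp.comp (hlin β 2)))
              (fun x => by positivity)]
            exact ENNReal.ofReal_le_ofReal (exp_int2_le hβ hu.1)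
        _ = ENNReal.ofReal (4/β) * ENNReal.ofReal (Real.exp (β * u) * ‖f t u‖ ^ 2) := by
            rw [hh]
            rw [← ENNReal.ofReal_mul (by positivity), ← ENNReal.ofReal_mul (by positivity)]
            congr 1
            have h2 : Real.exp (β*u/2) * Real.exp (β*u/2) = Real.exp (β*u) := by
              rw [← Real.exp_add]; congr 1; ring
            calc 4/β * Real.exp (β*u/2) * (Real.exp (β*u/2) * ‖f t u‖^2)
                = 4/β * ((Real.exp (β*u/2) * Real.exp (β*u/2)) * ‖f t u‖^2) := by ring
              _ = 4/β * (Real.exp (β*u) * ‖f t u‖^2) := by rw [h2]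
    calc (∫⁻ s in Icc t T, c s * ∫⁻ u in Icc s T, h t u)
        = ∫⁻ u in Icc t T, ∫⁻ s in Icc t T, G s u := by rw [e1, e2]
      _ ≤ ∫⁻ u in Icc t T, ENNReal.ofReal (4/β) *
            ENNReal.ofReal (Real.exp (β * u) * ‖f t u‖ ^ 2) := e3
      _ = ENNReal.ofReal (4/β) *
            ∫⁻ s in Icc t T, ENNReal.ofReal (Real.exp (β * s) * ‖f t s‖ ^ 2) :=
          lintegral_const_mul' _ _ ENNReal.ofReal_ne_top
  calc (∫⁻ t in Icc 0 T, ∫⁻ s in Icc t T,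
        ENNReal.ofReal (β * Real.exp (β * s) * ‖∫ u in Icc s T, f t u‖ ^ 2))
      ≤ ∫⁻ t in Icc 0 T, ENNReal.ofReal (4/β) *
          ∫⁻ s in Icc t T, ENNReal.ofReal (Real.exp (β * s) * ‖f t s‖ ^ 2) := by
        apply lintegral_mono_ae
        rw [ae_restrict_iff' measurableSet_Icc]
        apply Filter.Eventually.of_forall
        intro t ht
        exact le_trans (lintegral_mono fun s => key1 t s) (key2 t ht.2)
    _ = ENNReal.ofReal (4/β) * ∫⁻ t in Icc 0 T, ∫⁻ s in Icc t T,
          ENNReal.ofReal (Real.exp (β * s) * ‖f t s‖ ^ 2) :=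
        lintegral_const_mul' _ _ ENNReal.ofReal_ne_top
end

section
/- Let T > 0, β > 0, and let f : Δ → ℝ^k be a jointly measurable function on Δ = {(t, s) ∈ [0, T]² : t ≤ s} with ∫_0^T ∫_t^T e^{βs} |f(t, s)|² ds dt < ∞. Then ∫_0^T e^{βt} |∫_t^T f(t, s) ds|² dt ≤ (1/β) ∫_0^T ∫_t^T e^{βs} |f(t, s)|² ds dt. -/
open MeasureTheory Real

private lemma pointwise_bound {k : ℕ} (T β t : ℝ) (hβ : 0 < β)
    (g : ℝ → EuclideanSpace ℝ (Fin k)) (hg : Measurable g) :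
    ENNReal.ofReal (Real.exp (β * t) * ‖∫ s in Set.Icc t T, g s‖ ^ 2)
      ≤ ENNReal.ofReal (1 / β) *
        ∫⁻ s in Set.Icc t T, ENNReal.ofReal (Real.exp (β * s) * ‖g s‖ ^ 2) := by
  by_cases htT : t ≤ T
  swap
  · rw [Set.Icc_eq_empty htT]
    simp
  set A := ∫⁻ s in Set.Icc t T, ENNReal.ofReal (Real.exp (β * s) * ‖g s‖ ^ 2) with hA_def
  by_cases hA : A = ⊤
  · rw [hA, ENNReal.mul_top (by simp [ENNReal.ofReal_eq_zero]; positivity)]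
    exact le_top
  -- Hölder on [t, T]
  set μ := volume.restrict (Set.Icc t T) with hμ
  set u : ℝ → ENNReal := fun s => ENNReal.ofReal (Real.exp (-(β * s) / 2)) with hu_def
  set v : ℝ → ENNReal := fun s => ENNReal.ofReal (Real.exp (β * s / 2) * ‖g s‖) with hv_def
  have huv : ∀ s, u s * v s = ENNReal.ofReal ‖g s‖ := by
    intro s
    rw [hu_def, hv_def, ← ENNReal.ofReal_mul (Real.exp_nonneg _), ← mul_assoc,
      ← Real.exp_add, show -(β * s) / 2 + β * s / 2 = 0 by ring, Real.exp_zero, one_mul]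
  have hu2 : ∀ s, u s ^ (2 : ℝ) = ENNReal.ofReal (Real.exp (-(β * s))) := by
    intro s
    show ENNReal.ofReal (Real.exp (-(β * s) / 2)) ^ (2:ℝ) = _
    rw [ENNReal.ofReal_rpow_of_pos (Real.exp_pos _), ← Real.exp_mul]
    congr 1
    ring
  have hv2 : ∀ s, v s ^ (2 : ℝ) = ENNReal.ofReal (Real.exp (β * s) * ‖g s‖ ^ 2) := by
    intro s
    show ENNReal.ofReal (Real.exp (β * s / 2) * ‖g s‖) ^ (2:ℝ) = _
    rw [ENNReal.ofReal_rpow_of_nonneg (by positivity) (by norm_num),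
      Real.rpow_two, mul_pow, sq (Real.exp _), ← Real.exp_add]
    congr 2
    ring
  set C := ∫⁻ s, ENNReal.ofReal (Real.exp (-(β * s))) ∂μ with hC_def
  have hu_meas : Measurable u := by
    apply Measurable.ennreal_ofReal; fun_prop
  have hv_meas : Measurable v := by
    apply Measurable.ennreal_ofReal
    exact ((Real.measurable_exp.comp (by fun_prop)).mul hg.norm)
  set B := ∫⁻ s, ENNReal.ofReal ‖g s‖ ∂μ with hB_def
  have hBholder : B ≤ C ^ (1/2 : ℝ) * A ^ (1/2 : ℝ) := by
    have h := ENNReal.lintegral_mul_le_Lp_mul_Lq μ Real.HolderConjugate.two_two hu_meas.aemeasurable hv_meas.aemeasurable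
    calc B = ∫⁻ s, (u * v) s ∂μ := lintegral_congr fun s => (huv s).symm
    _ ≤ (∫⁻ s, u s ^ (2:ℝ) ∂μ) ^ (1/2 : ℝ) * (∫⁻ s, v s ^ (2:ℝ) ∂μ) ^ (1/2 : ℝ) := h
    _ = C ^ (1/2 : ℝ) * A ^ (1/2 : ℝ) := by
        rw [lintegral_congr hu2, lintegral_congr hv2]
  -- compute C
  have hint : ∫ s in Set.Icc t T, Real.exp (-(β * s)) = (Real.exp (-(β*t)) - Real.exp (-(β*T))) / β := by
    rw [MeasureTheory.integral_Icc_eq_integral_Ioc, ← intervalIntegral.integral_of_le htT]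
    have : ∀ s : ℝ, Real.exp (-(β * s)) = Real.exp ((-β) * s) := by intro s; ring_nf
    simp_rw [this]
    rw [intervalIntegral.integral_comp_mul_left (fun x => Real.exp x) (by linarith : (-β) ≠ 0),
      integral_exp, smul_eq_mul]
    field_simp [hβ.ne']
    ring
  have hCle : C ≤ ENNReal.ofReal (Real.exp (-(β * t)) / β) := by
    have hInt : IntegrableOn (fun s => Real.exp (-(β * s))) (Set.Icc t T) := by
      apply Continuous.integrableOn_Icc
      continuity
    rw [hC_def, hμ, ← MeasureTheory.ofReal_integral_eq_lintegral_ofReal hInt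
      (Filter.Eventually.of_forall fun s => Real.exp_nonneg _)]
    apply ENNReal.ofReal_le_ofReal
    rw [hint]
    have := Real.exp_nonneg (-(β*T))
    gcongr
    linarith
  have hC_fin : C ≠ ⊤ := fun h => by
    rw [h] at hCle; exact (ENNReal.ofReal_ne_top (hCle.antisymm le_top).symm).elim
  have hB_fin : B ≠ ⊤ := by
    intro hB
    rw [hB] at hBholder
    have : C ^ (1/2 : ℝ) * A ^ (1/2 : ℝ) ≠ ⊤ := by
      apply ENNReal.mul_ne_top (ENNReal.rpow_ne_top_of_nonneg (by norm_num) hC_fin)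
        (ENNReal.rpow_ne_top_of_nonneg (by norm_num) hA)
    exact this (top_le_iff.1 hBholder)
  -- real side
  have h1 : ‖∫ s in Set.Icc t T, g s‖ ≤ B.toReal := norm_integral_le_lintegral_norm g
  have hBsq : B ^ (2 : ℝ) ≤ C * A := by
    calc B ^ (2:ℝ) ≤ (C ^ (1/2 : ℝ) * A ^ (1/2 : ℝ)) ^ (2:ℝ) :=
          ENNReal.rpow_le_rpow hBholder (by norm_num)
    _ = C * A := by
        rw [ENNReal.mul_rpow_of_nonneg _ _ (by norm_num), ← ENNReal.rpow_mul,
          ← ENNReal.rpow_mul]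
        norm_num
  have h2 : B.toReal ^ 2 ≤ C.toReal * A.toReal := by
    have := ENNReal.toReal_mono (ENNReal.mul_ne_top hC_fin hA) hBsq
    rwa [← ENNReal.toReal_rpow, ENNReal.toReal_mul, Real.rpow_two] at this
  have hCtr : C.toReal ≤ Real.exp (-(β * t)) / β :=
    ENNReal.toReal_le_of_le_ofReal (by positivity) hCle
  have hreal : Real.exp (β * t) * ‖∫ s in Set.Icc t T, g s‖ ^ 2 ≤ (1 / β) * A.toReal := by
    have h3 : ‖∫ s in Set.Icc t T, g s‖ ^ 2 ≤ C.toReal * A.toReal :=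
      le_trans (by apply pow_le_pow_left₀ (norm_nonneg _) h1) h2
    have h4 : Real.exp (β * t) * ‖∫ s in Set.Icc t T, g s‖ ^ 2
        ≤ Real.exp (β * t) * ((Real.exp (-(β * t)) / β) * A.toReal) := by
      apply mul_le_mul_of_nonneg_left _ (Real.exp_nonneg _)
      exact h3.trans (mul_le_mul_of_nonneg_right hCtr ENNReal.toReal_nonneg)
    refine h4.trans_eq ?_
    rw [Real.exp_neg]
    field_simp
  calc ENNReal.ofReal (Real.exp (β * t) * ‖∫ s in Set.Icc t T, g s‖ ^ 2)
      ≤ ENNReal.ofReal ((1 / β) * A.toReal) := ENNReal.ofReal_le_ofReal hreal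
  _ = ENNReal.ofReal (1 / β) * ENNReal.ofReal A.toReal := ENNReal.ofReal_mul (by positivity)
  _ = ENNReal.ofReal (1 / β) * A := by rw [ENNReal.ofReal_toReal hA]

theorem statement_10 {k : ℕ} (T β : ℝ) (hT : 0 < T) (hβ : 0 < β)
    (f : ℝ → ℝ → EuclideanSpace ℝ (Fin k))
    (hmeas : Measurable fun p : ℝ × ℝ => f p.1 p.2)
    (hfin : (∫⁻ t in Set.Icc 0 T, ∫⁻ s in Set.Icc t T,
        ENNReal.ofReal (Real.exp (β * s) * ‖f t s‖ ^ 2)) < ⊤) :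
    (∫⁻ t in Set.Icc 0 T,
        ENNReal.ofReal (Real.exp (β * t) * ‖∫ s in Set.Icc t T, f t s‖ ^ 2))
      ≤ ENNReal.ofReal (1 / β) *
        ∫⁻ t in Set.Icc 0 T, ∫⁻ s in Set.Icc t T,
          ENNReal.ofReal (Real.exp (β * s) * ‖f t s‖ ^ 2) := by
  rw [← MeasureTheory.lintegral_const_mul' _ _ ENNReal.ofReal_ne_top]
  refine lintegral_mono fun t => ?_
  exact pointwise_bound T β t hβ (f t) (hmeas.comp measurable_prodMk_left)
end
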